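/- Let D₊, D₋ ∈ ℝᴺˣᴺ and H diagonal positive definite satisfy H D₋ + (H D₊)ᵀ = B with B = e_N e_Nᵀ − e₁ e₁ᵀ. Define the penalized operators D̃± = D± + H⁻¹ B_N with B_N = (1/2)(e₁e₁ᵀ − e₁e_Nᵀ + e_Ne₁ᵀ − e_Ne_Nᵀ). Then ⟨D̃₊ f, g⟩_H + ⟨f, D̃₋ g⟩_H = 0 for all f, g ∈ ℝᴺ. -/

import Mathlib

open Matrix

private lemma stdT {n : ℕ} (i j : Fin n) :
    (Matrix.single i j (1 : ℝ))ᵀ = Matrix.single j i (1 : ℝ) := by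
  ext a b
  simp [Matrix.single, Matrix.transpose_apply, and_comm]

/-- Periodic penalization: the penalized operators `D̃± = D± + H⁻¹ B_N` satisfy
the exact skew-adjoint (periodic SBP) relation `⟨D̃₊f, g⟩_H + ⟨f, D̃₋g⟩_H = 0`. -/
theorem dp_sbp_penalized_periodic (N : ℕ)
    (Dp Dm : Matrix (Fin N) (Fin N) ℝ) (w : Fin N → ℝ) (hw : ∀ i, 0 < w i)
    (i1 iN : Fin N) (hN : 0 < N) (hi1 : (i1 : ℕ) = 0) (hiN : (iN : ℕ) = N - 1)
    (hsbp : Matrix.diagonal w * Dm + (Matrix.diagonal w * Dp)ᵀ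
      = Matrix.single iN iN (1 : ℝ) - Matrix.single i1 i1 (1 : ℝ))
    (BN : Matrix (Fin N) (Fin N) ℝ)
    (hBN : BN = ((1 : ℝ) / 2) •
      (Matrix.single i1 i1 (1 : ℝ) - Matrix.single i1 iN (1 : ℝ)
        + Matrix.single iN i1 (1 : ℝ) - Matrix.single iN iN (1 : ℝ)))
    (Dpt Dmt : Matrix (Fin N) (Fin N) ℝ)
    (hDpt : Dpt = Dp + (Matrix.diagonal w)⁻¹ * BN)
    (hDmt : Dmt = Dm + (Matrix.diagonal w)⁻¹ * BN) :
    ∀ f g : Fin N → ℝ,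
      (Dpt.mulVec f) ⬝ᵥ ((Matrix.diagonal w).mulVec g)
        + f ⬝ᵥ ((Matrix.diagonal w).mulVec (Dmt.mulVec g)) = 0 := by
  intro f g
  set H := Matrix.diagonal w with hH
  have hdet : IsUnit H.det := by
    rw [hH, Matrix.det_diagonal]
    exact (Finset.prod_pos fun i _ => hw i).ne'.isUnit
  have hHs : Hᵀ = H := Matrix.diagonal_transpose w
  have hBNt : BNᵀ = ((1 : ℝ) / 2) •
      (Matrix.single i1 i1 (1 : ℝ) - Matrix.single iN i1 (1 : ℝ)
        + Matrix.single i1 iN (1 : ℝ) - Matrix.single iN iN (1 : ℝ)) := by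
    rw [hBN]
    simp [Matrix.transpose_smul, Matrix.transpose_sub, Matrix.transpose_add, stdT]
  have hBNsum : BN + BNᵀ = Matrix.single i1 i1 (1 : ℝ)
      - Matrix.single iN iN (1 : ℝ) := by
    rw [hBNt, hBN]; module
  have key : Dptᵀ * H + H * Dmt = 0 := by
    have h1 : (H⁻¹)ᵀ = H⁻¹ := by rw [Matrix.transpose_nonsing_inv, hHs]
    have hsum : Dpᵀ * H + H * Dm
        = Matrix.single iN iN (1 : ℝ) - Matrix.single i1 i1 (1 : ℝ) := by
      rw [Matrix.transpose_mul, hHs] at hsbp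
      rw [← hsbp]; abel
    rw [hDpt, hDmt, Matrix.transpose_add, Matrix.transpose_mul, h1, Matrix.add_mul,
      Matrix.mul_add, Matrix.mul_assoc BNᵀ, Matrix.nonsing_inv_mul _ hdet, Matrix.mul_one,
      ← Matrix.mul_assoc H, Matrix.mul_nonsing_inv _ hdet, Matrix.one_mul]
    have : Dpᵀ * H + BNᵀ + (H * Dm + BN)
        = (Dpᵀ * H + H * Dm) + (BN + BNᵀ) := by abel
    rw [this, hsum, hBNsum]; abel
  calc (Dpt.mulVec f) ⬝ᵥ (H.mulVec g) + f ⬝ᵥ (H.mulVec (Dmt.mulVec g))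
      = f ⬝ᵥ ((Dptᵀ * H + H * Dmt).mulVec g) := by
        rw [Matrix.add_mulVec, dotProduct_add, Matrix.mulVec_mulVec,
          Matrix.dotProduct_mulVec f (H * Dmt), Matrix.dotProduct_mulVec (Dpt *ᵥ f) H,
          Matrix.vecMul_mulVec, Matrix.dotProduct_mulVec f (Dptᵀ * H)]
    _ = 0 := by rw [key]; simp
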